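/- arXiv:1904.04549 — 2 statements merged into one kernel-verified Lean document; each statement's English description precedes it below -/
import Mathlib

section
/- Let m ≥ 1, 1 ≤ r ≤ s < ∞, and p_k ≤ q_k (1 ≤ k ≤ m) with 1/s − ∑_{k=1}^m 1/q_k = 1/r − ∑_{k=1}^m 1/p_k. Then every m-linear operator T : E_1 × ⋯ × E_m → F that is absolutely (r; p_1,…,p_m)-summing is absolutely (s; q_1,…,q_m)-summing, and the corresponding summing norm does not increase. -/
/-- **Matos' Inclusion Theorem for absolutely summing multilinear operators.**
Let `m ≥ 1`, `1 ≤ r ≤ s < ∞`, `p k ≤ q k` with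
`1/s - ∑ 1/q_k = 1/r - ∑ 1/p_k`.  Then every absolutely `(r;p)`-summing
`m`-linear operator is absolutely `(s;q)`-summing; any admissible constant `C`
for `(r;p)` remains admissible for `(s;q)`, so the summing norm does not
increase. -/
theorem stmt2 (m : ℕ) (hm : 1 ≤ m)
    {E : Fin m → Type*} [∀ k, NormedAddCommGroup (E k)] [∀ k, NormedSpace ℝ (E k)]
    [∀ k, CompleteSpace (E k)]
    {F : Type*} [NormedAddCommGroup F] [NormedSpace ℝ F] [CompleteSpace F]
    (r s : ℝ) (p q : Fin m → ℝ) (hr : 1 ≤ r) (hrs : r ≤ s)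
    (hp : ∀ k, 1 ≤ p k) (hpq : ∀ k, p k ≤ q k)
    (heq : 1 / s - ∑ k, 1 / q k = 1 / r - ∑ k, 1 / p k)
    (T : ContinuousMultilinearMap ℝ E F) (C : ℝ) (hC : 0 ≤ C)
    (hT : ∀ (n : ℕ) (x : ∀ k, Fin n → E k),
      (∑ i, ‖T (fun k => x k i)‖ ^ r) ^ (1 / r) ≤
        C * ∏ k, ⨆ f : {f : E k →L[ℝ] ℝ // ‖f‖ ≤ 1},
          (∑ i, ‖f.1 (x k i)‖ ^ p k) ^ (1 / p k)) :
    ∀ (n : ℕ) (x : ∀ k, Fin n → E k),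
      (∑ i, ‖T (fun k => x k i)‖ ^ s) ^ (1 / s) ≤
        C * ∏ k, ⨆ f : {f : E k →L[ℝ] ℝ // ‖f‖ ≤ 1},
          (∑ i, ‖f.1 (x k i)‖ ^ q k) ^ (1 / q k) := by
  intro n x
  have hr0 : (0:ℝ) < r := zero_lt_one.trans_le hr
  have hs1 : (1:ℝ) ≤ s := hr.trans hrs
  have hs0 : (0:ℝ) < s := zero_lt_one.trans_le hs1
  have hp0 : ∀ k, (0:ℝ) < p k := fun k => zero_lt_one.trans_le (hp k)
  have hq0 : ∀ k, (0:ℝ) < q k := fun k => (hp0 k).trans_le (hpq k)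
  set α : Fin n → ℝ := fun i => ‖T (fun k => x k i)‖ with hαdef
  have hα0 : ∀ i, 0 ≤ α i := fun i => norm_nonneg _
  set a : Fin m → ℝ := fun k => 1 / p k - 1 / q k with hadef
  have ha0 : ∀ k, 0 ≤ a k := fun k =>
    sub_nonneg.2 (one_div_le_one_div_of_le (hp0 k) (hpq k))
  have hsum_a : ∑ k, a k = 1 / r - 1 / s := by
    have h1 : ∑ k, a k = (∑ k, 1 / p k) - ∑ k, 1 / q k := by
      simp [hadef, Finset.sum_sub_distrib]
    linarith
  set A : ℝ := ∑ i, α i ^ s with hAdef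
  have hA0 : 0 ≤ A := Finset.sum_nonneg fun i _ => Real.rpow_nonneg (hα0 i) s
  set S : Fin m → ℝ := fun k => ⨆ f : {f : E k →L[ℝ] ℝ // ‖f‖ ≤ 1},
      (∑ i, ‖f.1 (x k i)‖ ^ q k) ^ (1 / q k) with hSdef
  have hS0 : ∀ k, 0 ≤ S k := fun k => Real.iSup_nonneg fun f =>
    Real.rpow_nonneg (Finset.sum_nonneg fun i _ => Real.rpow_nonneg (norm_nonneg _) _) _
  have hRHS0 : 0 ≤ C * ∏ k, S k :=
    mul_nonneg hC (Finset.prod_nonneg fun k _ => hS0 k)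
  show A ^ (1 / s) ≤ C * ∏ k, S k
  rcases eq_or_lt_of_le hA0 with hA | hApos
  · rw [← hA, Real.zero_rpow (by positivity : (1:ℝ)/s ≠ 0)]
    exact hRHS0
  -- main case : A > 0
  set y : ∀ k, Fin n → E k := fun k i => (α i ^ (s * a k)) • x k i with hydef
  have key := hT n y
  -- compute the left side of key
  have hTy : ∀ i, ‖T (fun k => y k i)‖ = (∏ k, α i ^ (s * a k)) * α i := by
    intro i
    have h1 : (fun k => y k i) = fun k => (α i ^ (s * a k)) • x k i := rfl
    rw [h1, T.map_smul_univ, norm_smul, Real.norm_eq_abs,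
      abs_of_nonneg (Finset.prod_nonneg fun k _ => Real.rpow_nonneg (hα0 i) _)]
  have hsumTy : ∑ i, ‖T (fun k => y k i)‖ ^ r = A := by
    refine Finset.sum_congr rfl fun i _ => ?_
    rw [hTy i]
    rcases eq_or_lt_of_le (hα0 i) with h0 | h0
    · rw [← h0, mul_zero, Real.zero_rpow hr0.ne', Real.zero_rpow hs0.ne']
    · have hmul : ∑ k, s * a k = s * (1/r - 1/s) := by
        rw [← Finset.mul_sum, hsum_a]
      rw [← Real.rpow_sum_of_pos h0, hmul,
        ← Real.rpow_add_one h0.ne', ← Real.rpow_mul (hα0 i)]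
      congr 1
      field_simp
      ring
  rw [hsumTy] at key
  -- bound each sup in key
  have hkey : ∀ k, (⨆ f : {f : E k →L[ℝ] ℝ // ‖f‖ ≤ 1},
      (∑ i, ‖f.1 (y k i)‖ ^ p k) ^ (1 / p k)) ≤ A ^ a k * S k := by
    intro k
    haveI : Nonempty {f : E k →L[ℝ] ℝ // ‖f‖ ≤ 1} := ⟨⟨0, by simp⟩⟩
    have hbdd : BddAbove (Set.range fun f : {f : E k →L[ℝ] ℝ // ‖f‖ ≤ 1} =>
        (∑ i, ‖f.1 (x k i)‖ ^ q k) ^ (1 / q k)) := by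
      refine ⟨(∑ i, ‖x k i‖ ^ q k) ^ (1 / q k), ?_⟩
      rintro _ ⟨g, rfl⟩
      refine Real.rpow_le_rpow
        (Finset.sum_nonneg fun i _ => Real.rpow_nonneg (norm_nonneg _) _)
        (Finset.sum_le_sum fun i _ => ?_) (one_div_nonneg.2 (hq0 k).le)
      refine Real.rpow_le_rpow (norm_nonneg _) ?_ (hq0 k).le
      calc ‖g.1 (x k i)‖ ≤ ‖g.1‖ * ‖x k i‖ := g.1.le_opNorm _
        _ ≤ 1 * ‖x k i‖ := mul_le_mul_of_nonneg_right g.2 (norm_nonneg _)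
        _ = ‖x k i‖ := one_mul _
    refine ciSup_le fun f => ?_
    have hfy : ∀ i, ‖f.1 (y k i)‖ ^ p k
        = α i ^ (s * a k * p k) * ‖f.1 (x k i)‖ ^ p k := by
      intro i
      have : f.1 (y k i) = (α i ^ (s * a k)) • f.1 (x k i) := by
        simp [hydef]
      rw [this, norm_smul, Real.norm_eq_abs, abs_of_nonneg (Real.rpow_nonneg (hα0 i) _),
        Real.mul_rpow (Real.rpow_nonneg (hα0 i) _) (norm_nonneg _),
        ← Real.rpow_mul (hα0 i)]
    have haval : a k = 1 / p k - 1 / q k := rfl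
    set B := ∑ i, ‖f.1 (x k i)‖ ^ q k with hBdef
    have hB0 : 0 ≤ B := Finset.sum_nonneg fun i _ => Real.rpow_nonneg (norm_nonneg _) _
    have step : (∑ i, ‖f.1 (y k i)‖ ^ p k) ^ (1 / p k)
        ≤ A ^ a k * B ^ (1 / q k) := by
      rcases eq_or_lt_of_le (ha0 k) with hak | hak
      · -- a k = 0, so p k = q k
        have h1 : 1 / p k = 1 / q k := by
          have h2 : 1 / p k - 1 / q k = 0 := by rw [← haval, ← hak]
          linarith
        have hpk : p k = q k := by
          have h2 : (p k)⁻¹ = (q k)⁻¹ := by rw [← one_div, ← one_div, h1]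
          exact inv_injective h2
        have h3 : ∀ i, ‖f.1 (y k i)‖ ^ p k = ‖f.1 (x k i)‖ ^ q k := by
          intro i
          rw [hfy i, ← hak, mul_zero, zero_mul, Real.rpow_zero, one_mul, hpk]
        rw [show (∑ i, ‖f.1 (y k i)‖ ^ p k) = B from Finset.sum_congr rfl fun i _ => h3 i,
          ← hak, Real.rpow_zero, one_mul, hpk]
      · -- a k > 0 : Hölder with exponents 1/(p k * a k) and q k / p k
        set u : ℝ := 1 / (p k * a k) with hudef
        set v : ℝ := q k / p k with hvdef
        have hpkak : 0 < p k * a k := mul_pos (hp0 k) hak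
        have hpa1 : p k * a k = 1 - p k / q k := by
          rw [haval, mul_sub, mul_one_div, div_self (hp0 k).ne', mul_one_div]
        have hupos : 1 < u := by
          rw [hudef, lt_div_iff₀ hpkak, one_mul, hpa1]
          have : 0 < p k / q k := div_pos (hp0 k) (hq0 k)
          linarith
        have hconj : Real.HolderConjugate u v := by
          refine Real.holderConjugate_iff.mpr ⟨hupos, ?_⟩
          rw [hudef, hvdef, one_div, inv_inv, inv_div, hpa1]
          ring
        have e1 : ∀ i : Fin n, |α i ^ (s * a k * p k)| ^ u = α i ^ s := by
          intro i
          rw [abs_of_nonneg (Real.rpow_nonneg (hα0 i) _), ← Real.rpow_mul (hα0 i)]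
          congr 1
          rw [hudef, mul_one_div, mul_assoc s, mul_comm (a k) (p k), mul_div_assoc,
            div_self hpkak.ne', mul_one]
        have e2 : ∀ i : Fin n, |‖f.1 (x k i)‖ ^ p k| ^ v = ‖f.1 (x k i)‖ ^ q k := by
          intro i
          rw [abs_of_nonneg (Real.rpow_nonneg (norm_nonneg _) _), ← Real.rpow_mul (norm_nonneg _)]
          congr 1
          rw [hvdef, mul_comm]
          exact div_mul_cancel₀ _ (hp0 k).ne'
        have holder : ∑ i, α i ^ (s * a k * p k) * ‖f.1 (x k i)‖ ^ p k
            ≤ A ^ (p k * a k) * B ^ (p k / q k) := by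
          have h := Real.inner_le_Lp_mul_Lq (Finset.univ (α := Fin n))
            (fun i => α i ^ (s * a k * p k)) (fun i => ‖f.1 (x k i)‖ ^ p k) hconj
          refine h.trans_eq ?_
          congr 1
          · rw [show (∑ i, |α i ^ (s * a k * p k)| ^ u) = A from
              Finset.sum_congr rfl fun i _ => e1 i, hudef, one_div_one_div]
          · rw [show (∑ i, |‖f.1 (x k i)‖ ^ p k| ^ v) = B from
              Finset.sum_congr rfl fun i _ => e2 i, hvdef, one_div_div]
        calc (∑ i, ‖f.1 (y k i)‖ ^ p k) ^ (1 / p k)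
            = (∑ i, α i ^ (s * a k * p k) * ‖f.1 (x k i)‖ ^ p k) ^ (1 / p k) := by
              simp only [hfy]
          _ ≤ (A ^ (p k * a k) * B ^ (p k / q k)) ^ (1 / p k) := by
              refine Real.rpow_le_rpow (Finset.sum_nonneg fun i _ =>
                mul_nonneg (Real.rpow_nonneg (hα0 i) _) (Real.rpow_nonneg (norm_nonneg _) _))
                holder (one_div_nonneg.2 (hp0 k).le)
          _ = A ^ a k * B ^ (1 / q k) := by
              rw [Real.mul_rpow (Real.rpow_nonneg hA0 _) (Real.rpow_nonneg hB0 _),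
                ← Real.rpow_mul hA0, ← Real.rpow_mul hB0]
              congr 2
              · rw [mul_comm (p k) (a k), mul_assoc, mul_one_div, div_self (hp0 k).ne',
                  mul_one]
              · rw [div_mul_div_comm, mul_one, mul_comm (q k) (p k), ← div_div,
                  div_self (hp0 k).ne']
    refine step.trans ?_
    exact mul_le_mul_of_nonneg_left (le_ciSup hbdd f) (Real.rpow_nonneg hA0 _)
  -- assemble
  have hprod : (∏ k, ⨆ f : {f : E k →L[ℝ] ℝ // ‖f‖ ≤ 1},
      (∑ i, ‖f.1 (y k i)‖ ^ p k) ^ (1 / p k)) ≤ ∏ k, (A ^ a k * S k) := by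
    refine Finset.prod_le_prod (fun k _ => ?_) (fun k _ => hkey k)
    exact Real.iSup_nonneg fun f => Real.rpow_nonneg
      (Finset.sum_nonneg fun i _ => Real.rpow_nonneg (norm_nonneg _) _) _
  have hprod2 : ∏ k, (A ^ a k * S k) = A ^ (1/r - 1/s) * ∏ k, S k := by
    rw [Finset.prod_mul_distrib, ← Real.rpow_sum_of_pos hApos, hsum_a]
  have key2 : A ^ (1/r) ≤ C * (A ^ (1/r - 1/s) * ∏ k, S k) := by
    calc A ^ (1/r) ≤ C * ∏ k, ⨆ f : {f : E k →L[ℝ] ℝ // ‖f‖ ≤ 1},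
        (∑ i, ‖f.1 (y k i)‖ ^ p k) ^ (1 / p k) := key
      _ ≤ C * ∏ k, (A ^ a k * S k) := mul_le_mul_of_nonneg_left hprod hC
      _ = C * (A ^ (1/r - 1/s) * ∏ k, S k) := by rw [hprod2]
  have hsplit : A ^ (1/r) = A ^ (1/r - 1/s) * A ^ (1/s) := by
    rw [← Real.rpow_add hApos]
    ring_nf
  rw [hsplit] at key2
  have hpos : 0 < A ^ (1/r - 1/s) := Real.rpow_pos_of_pos hApos _
  have final : A ^ (1/s) * A ^ (1/r - 1/s) ≤ (C * ∏ k, S k) * A ^ (1/r - 1/s) := by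
    calc A ^ (1/s) * A ^ (1/r - 1/s) = A ^ (1/r - 1/s) * A ^ (1/s) := mul_comm _ _
      _ ≤ C * (A ^ (1/r - 1/s) * ∏ k, S k) := key2
      _ = (C * ∏ k, S k) * A ^ (1/r - 1/s) := by ring
  exact le_of_mul_le_mul_right final hpos
end

section
/- Let m, d be positive integers with 1 ≤ d ≤ m, let I = {I_1,…,I_d} be a partition of {1,…,m} into nonempty sets, and let (p_1,…,p_m, q_1,…,q_d) ∈ [1,∞)^{m+d}. If there exists k ∈ {1,…,d} with 1/q_k > ∑_{j ∈ I_k} 1/p_j, then the only I-block (q_1,…,q_d; p_1,…,p_m)-summing m-linear operator from E_1 × ⋯ × E_m to F is the zero operator, for any infinite-dimensional Banach spaces E_1,…,E_m and any Banach space F ≠ {0}. -/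
open scoped ENNReal NNReal

/-- The weak `ℓ_p` norm (in `ℝ≥0∞`) of a sequence in a normed space `E`:
`sup_{‖f‖ ≤ 1} (∑_j ‖f (x_j)‖^p)^{1/p}`. -/
noncomputable def weakNorm {E : Type*} [NormedAddCommGroup E] [NormedSpace ℝ E]
    (p : ℝ) (x : ℕ → E) : ℝ≥0∞ :=
  ⨆ f : {f : E →L[ℝ] ℝ // ‖f‖ ≤ 1},
    (∑' j : ℕ, (‖f.1 (x j)‖₊ : ℝ≥0∞) ^ p) ^ (1 / p)

/-- Iterated mixed `ℓ_{s_1}(ℓ_{s_2}(⋯ℓ_{s_d}))` norm (in `ℝ≥0∞`) of a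
`d`-indexed family: `(∑_{i_1} (⋯ (∑_{i_d} g^{s_d})^{s_{d-1}/s_d} ⋯)^{s_1/s_2})^{1/s_1}`. -/
noncomputable def emixed : (d : ℕ) → (Fin d → ℝ) → ((Fin d → ℕ) → ℝ≥0∞) → ℝ≥0∞
  | 0, _, g => g finZeroElim
  | d + 1, s, g =>
      (∑' i : ℕ, (emixed d (Fin.tail s) (fun j => g (Fin.cons i j))) ^ s 0) ^ (1 / s 0)

lemma emixed_congr {d : ℕ} {s : Fin d → ℝ} {g g' : (Fin d → ℕ) → ℝ≥0∞}
    (h : ∀ i, g i = g' i) : emixed d s g = emixed d s g' := by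
  congr 1; exact funext h

lemma emixed_zero (d : ℕ) (s : Fin d → ℝ) (hs : ∀ n, 0 < s n) :
    emixed d s (fun _ => 0) = 0 := by
  induction d with
  | zero => simp [emixed]
  | succ d ih =>
      simp only [emixed]
      rw [show (fun i : ℕ => (emixed d (Fin.tail s) fun _ => (0:ℝ≥0∞)) ^ s 0)
          = fun _ : ℕ => 0 from ?_]
      · rw [tsum_zero, ENNReal.zero_rpow_of_pos (one_div_pos.mpr (hs 0))]
      · funext i
        rw [ih (Fin.tail s) (fun n => hs n.succ), ENNReal.zero_rpow_of_pos (hs 0)]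

lemma rpow_inv_self (c : ℝ≥0∞) {t : ℝ} (ht : 0 < t) : (c ^ t) ^ (1 / t) = c := by
  rw [← ENNReal.rpow_mul, mul_one_div, div_self ht.ne', ENNReal.rpow_one]

lemma emixed_delta (d : ℕ) (s : Fin d → ℝ) (hs : ∀ n, 0 < s n) (c : ℝ≥0∞) :
    emixed d s (fun j => if j = 0 then c else 0) = c := by
  induction d with
  | zero => simp [emixed, Subsingleton.elim (finZeroElim : Fin 0 → ℕ) 0]
  | succ d ih =>
      simp only [emixed]
      have key : ∀ i : ℕ, (emixed d (Fin.tail s)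
          (fun j => if Fin.cons i j = (0 : Fin (d+1) → ℕ) then c else 0)) ^ s 0
          = if i = 0 then c ^ s 0 else 0 := by
        intro i
        by_cases hi : i = 0
        · subst hi
          rw [if_pos rfl]
          congr 1
          rw [emixed_congr (g' := fun j => if j = 0 then c else 0)]
          · exact ih (Fin.tail s) (fun n => hs n.succ)
          · intro j
            congr 1
            simp only [eq_iff_iff]
            constructor
            · intro h; funext n
              have := congrFun h n.succ
              simpa [Fin.cons] using this
            · intro h; subst h; funext n
              cases n using Fin.cases <;> simp
        · rw [if_neg hi]
          rw [emixed_congr (g' := fun _ => 0)]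
          · rw [emixed_zero d (Fin.tail s) (fun n => hs n.succ),
              ENNReal.zero_rpow_of_pos (hs 0)]
          · intro j
            rw [if_neg]
            intro h
            exact hi (by simpa using congrFun h 0)
      rw [tsum_congr key, tsum_ite_eq, rpow_inv_self _ (hs 0)]

lemma emixed_line (d : ℕ) (s : Fin d → ℝ) (hs : ∀ n, 0 < s n) (k : Fin d) (c : ℕ → ℝ≥0∞) :
    emixed d s (fun i => if ∀ n, n ≠ k → i n = 0 then c (i k) else 0)
      = (∑' n : ℕ, c n ^ s k) ^ (1 / s k) := by
  induction d with
  | zero => exact k.elim0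
  | succ d ih =>
      simp only [emixed]
      cases k using Fin.cases with
      | zero =>
          have key : ∀ i : ℕ, (emixed d (Fin.tail s)
              (fun j : Fin d → ℕ => if ∀ n, n ≠ (0 : Fin (d+1)) → (Fin.cons i j : Fin (d+1) → ℕ) n = 0
                then c ((Fin.cons i j : Fin (d+1) → ℕ) 0) else 0)) = c i := by
            intro i
            rw [emixed_congr (g' := fun j => if j = 0 then c i else 0)]
            · exact emixed_delta d (Fin.tail s) (fun n => hs n.succ) (c i)
            · intro j
              have : (∀ n, n ≠ (0 : Fin (d+1)) → (Fin.cons i j : Fin (d+1) → ℕ) n = 0) ↔ j = 0 := by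
                constructor
                · intro h; funext n
                  simpa using h n.succ (Fin.succ_ne_zero n)
                · intro h n hn; subst h
                  cases n using Fin.cases with
                  | zero => exact absurd rfl hn
                  | succ n' => simp
              simp only [Fin.cons_zero, this]
          rw [tsum_congr (fun i => by rw [key i])]
      | succ k' =>
          have key : ∀ i : ℕ, (emixed d (Fin.tail s)
              (fun j : Fin d → ℕ => if ∀ n, n ≠ Fin.succ k' → (Fin.cons i j : Fin (d+1) → ℕ) n = 0
                then c ((Fin.cons i j : Fin (d+1) → ℕ) (Fin.succ k')) else 0)) ^ s 0
              = if i = 0 then ((∑' n : ℕ, c n ^ s (Fin.succ k')) ^ (1 / s (Fin.succ k'))) ^ s 0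
                else 0 := by
            intro i
            by_cases hi : i = 0
            · subst hi
              rw [if_pos rfl]
              congr 1
              rw [emixed_congr
                (g' := fun j => if ∀ n', n' ≠ k' → j n' = 0 then c (j k') else 0)]
              · have := ih (Fin.tail s) (fun n => hs n.succ) k'
                rw [this]
                rfl
              · intro j
                have : (∀ n, n ≠ Fin.succ k' → (Fin.cons 0 j : Fin (d+1) → ℕ) n = 0)
                    ↔ (∀ n', n' ≠ k' → j n' = 0) := by
                  constructor
                  · intro h n' hn'
                    simpa using h n'.succ (by simpa [Fin.succ_inj] using hn')
                  · intro h n hn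
                    cases n using Fin.cases with
                    | zero => simp
                    | succ n'' => simpa using h n'' (by simpa [Fin.succ_inj] using hn)
                simp only [Fin.cons_succ, this]
            · rw [if_neg hi]
              rw [emixed_congr (g' := fun _ => 0)]
              · rw [emixed_zero d (Fin.tail s) (fun n => hs n.succ),
                  ENNReal.zero_rpow_of_pos (hs 0)]
              · intro j
                rw [if_neg]
                intro h
                exact hi (by simpa using h 0 (Fin.succ_ne_zero k').symm)
          rw [tsum_congr key, tsum_ite_eq, rpow_inv_self _ (hs 0)]

lemma summable_shift_rpow {r : ℝ} (hr : 1 < r) :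
    Summable (fun n : ℕ => ((n:ℝ)+1) ^ (-r)) := by
  have h1 : Summable (fun n : ℕ => ((n:ℝ) ^ r)⁻¹) := Real.summable_nat_rpow_inv.mpr hr
  have h2 := (summable_nat_add_iff 1).mpr h1
  refine h2.congr fun n => ?_
  push_cast
  rw [← Real.rpow_neg (by positivity)]

lemma tsum_ofReal_rpow_ne_top {r : ℝ} (hr : 1 < r) :
    ∑' n : ℕ, ENNReal.ofReal (((n:ℝ)+1) ^ (-r)) ≠ ⊤ := by
  have : ∀ n : ℕ, ENNReal.ofReal (((n:ℝ)+1) ^ (-r))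
      = ((Real.toNNReal (((n:ℝ)+1) ^ (-r)) : ℝ≥0) : ℝ≥0∞) := fun n => rfl
  rw [tsum_congr this]
  rw [ENNReal.tsum_coe_ne_top_iff_summable]
  rw [← NNReal.summable_coe]
  refine (summable_shift_rpow hr).congr fun n => ?_
  simp [Real.coe_toNNReal _ (by positivity : (0:ℝ) ≤ ((n:ℝ)+1) ^ (-r))]

lemma tsum_ofReal_rpow_top {t : ℝ} (ht1 : t ≤ 1) :
    ∑' n : ℕ, ENNReal.ofReal (((n:ℝ)+1) ^ (-t)) = ⊤ := by
  by_contra h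
  have hle : ∀ n : ℕ, ENNReal.ofReal (((n:ℝ)+1)⁻¹)
      ≤ ENNReal.ofReal (((n:ℝ)+1) ^ (-t)) := by
    intro n
    apply ENNReal.ofReal_le_ofReal
    rw [← Real.rpow_neg_one ((n:ℝ)+1)]
    exact Real.rpow_le_rpow_of_exponent_le (by push_cast; linarith [Nat.cast_nonneg (α := ℝ) n])
      (by linarith)
  have htop : ∑' n : ℕ, ENNReal.ofReal (((n:ℝ)+1)⁻¹) ≠ ⊤ :=
    fun h' => h (top_le_iff.mp (h' ▸ ENNReal.tsum_le_tsum hle))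
  have : Summable (fun n : ℕ => Real.toNNReal (((n:ℝ)+1)⁻¹)) := by
    rw [← ENNReal.tsum_coe_ne_top_iff_summable]
    exact htop
  rw [← NNReal.summable_coe] at this
  have hsum : Summable (fun n : ℕ => ((n:ℝ)+1)⁻¹) := by
    refine this.congr fun n => ?_
    simp [Real.coe_toNNReal _ (by positivity : (0:ℝ) ≤ ((n:ℝ)+1)⁻¹)]
  have hsum' : Summable (fun n : ℕ => (((n + 1 : ℕ) : ℝ))⁻¹) :=
    hsum.congr fun n => by push_cast; ring_nf
  exact Real.not_summable_natCast_inv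
    ((summable_nat_add_iff (f := fun n : ℕ => ((n:ℝ))⁻¹) 1).mp hsum')

/-- **Triviality of the block summing class.**
Let `I = {I_1,…,I_d}` be a partition of `{1,…,m}` into nonempty sets (encoded by a
surjection `b : Fin m → Fin d`, where `I_k = b⁻¹{k}`), with exponents
`p_j, q_k ∈ [1,∞)`.  If `1/q_k > ∑_{j ∈ I_k} 1/p_j` for some `k`, then the only
`I`-block `(q;p)`-summing `m`-linear operator `T : E_1 × ⋯ × E_m → F` is `0`,
for any infinite-dimensional Banach spaces `E_j` and nonzero Banach space `F`. -/
theorem stmt3 (m d : ℕ) (hd : 1 ≤ d) (hdm : d ≤ m)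
    (b : Fin m → Fin d) (hb : Function.Surjective b)
    (p : Fin m → ℝ) (q : Fin d → ℝ) (hp : ∀ j, 1 ≤ p j) (hq : ∀ k, 1 ≤ q k)
    {E : Fin m → Type*} [∀ j, NormedAddCommGroup (E j)] [∀ j, NormedSpace ℝ (E j)]
    [∀ j, CompleteSpace (E j)] (hE : ∀ j, ¬ FiniteDimensional ℝ (E j))
    {F : Type*} [NormedAddCommGroup F] [NormedSpace ℝ F] [CompleteSpace F] [Nontrivial F]
    (k : Fin d)
    (hk : 1 / q k > ∑ j ∈ Finset.univ.filter (fun j => b j = k), 1 / p j)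
    (T : ContinuousMultilinearMap ℝ E F)
    (hT : ∃ C : ℝ≥0, 0 < C ∧ ∀ x : ∀ j, ℕ → E j,
      emixed d q (fun i => (‖T (fun j => x j (i (b j)))‖₊ : ℝ≥0∞)) ≤
        (C : ℝ≥0∞) * ∏ j, weakNorm (p j) (x j)) :
    T = 0 := by
  classical
  obtain ⟨C, hCpos, hTs⟩ := hT
  ext a
  rw [ContinuousMultilinearMap.zero_apply]
  by_contra ha
  have hqk : (0:ℝ) < q k := lt_of_lt_of_le one_pos (hq k)
  have hppos : ∀ j, (0:ℝ) < p j := fun j => lt_of_lt_of_le one_pos (hp j)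
  set Ik := Finset.univ.filter (fun j => b j = k) with hIkdef
  set S := ∑ j ∈ Ik, 1 / p j with hSdef
  have hm1 : 1 ≤ m := le_trans hd hdm
  have hmpos : (0:ℝ) < m := by exact_mod_cast hm1
  set ε : ℝ := (1 / q k - S) / (2 * m) with hεdef
  have hεpos : 0 < ε := div_pos (by linarith [hk]) (by positivity)
  set θ : Fin m → ℝ := fun j => 1 / p j + ε with hθdef
  have hθpos : ∀ j, 0 < θ j := fun j => by
    have := hppos j; have : 0 < 1 / p j := by positivity
    simp only [hθdef]; linarith [hεpos]
  set Θ := ∑ j ∈ Ik, θ j with hΘdef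
  have hIkne : Ik.Nonempty := by
    obtain ⟨j0, hj0⟩ := hb k
    exact ⟨j0, by simp [hIkdef, hj0]⟩
  have hΘpos : 0 < Θ := Finset.sum_pos (fun j _ => hθpos j) hIkne
  have hcard : (Ik.card : ℝ) ≤ m := by
    have h1 : Ik.card ≤ m := by
      simpa using Finset.card_le_card (Finset.subset_univ Ik)
    exact_mod_cast h1
  have hΘeq : Θ = S + Ik.card * ε := by
    simp only [hΘdef, hθdef, Finset.sum_add_distrib, Finset.sum_const, nsmul_eq_mul, hSdef]
  have hΘlt : Θ < 1 / q k := by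
    have hmε : (m:ℝ) * ε = (1 / q k - S) / 2 := by
      rw [hεdef]; field_simp
    have h2 : (Ik.card : ℝ) * ε ≤ (m:ℝ) * ε := mul_le_mul_of_nonneg_right hcard hεpos.le
    rw [hΘeq]
    have hkS : S < 1 / q k := hk
    nlinarith [hεpos]
  have hΘq : Θ * q k < 1 := by
    calc Θ * q k < (1 / q k) * q k := mul_lt_mul_of_pos_right hΘlt hqk
    _ = 1 := by field_simp
  -- the test sequences
  set cs : Fin m → ℕ → ℝ := fun j n =>
    if b j = k then ((n:ℝ)+1) ^ (-(θ j)) else if n = 0 then 1 else 0 with hcsdef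
  have hineq := hTs (fun j n => cs j n • a j)
  -- identify the left-hand side function
  set Cf : ℕ → ℝ≥0∞ := fun n => ENNReal.ofReal (((n:ℝ)+1) ^ (-Θ)) * ‖T a‖₊ with hCfdef
  have hCf : ∀ i : Fin d → ℕ,
      (‖T (fun j => (fun (j : Fin m) (n : ℕ) => cs j n • a j) j (i (b j)))‖₊ : ℝ≥0∞)
      = if ∀ n, n ≠ k → i n = 0 then Cf (i k) else 0 := by
    intro i
    have hTv : T (fun j => cs j (i (b j)) • a j) = (∏ j, cs j (i (b j))) • T a :=
      T.map_smul_univ _ _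
    simp only [hTv, nnnorm_smul, ENNReal.coe_mul]
    rw [← Finset.prod_filter_mul_prod_filter_not Finset.univ (fun j => b j = k)]
    by_cases hi : ∀ n, n ≠ k → i n = 0
    · rw [if_pos hi]
      have h2 : ∏ j ∈ Finset.univ.filter (fun j => ¬ b j = k), cs j (i (b j)) = 1 := by
        refine Finset.prod_eq_one fun j hj => ?_
        simp only [Finset.mem_filter] at hj
        simp only [hcsdef]
        rw [if_neg hj.2, if_pos (hi (b j) hj.2)]
      have h1 : ∏ j ∈ Finset.univ.filter (fun j => b j = k), cs j (i (b j))
          = ((i k : ℝ)+1) ^ (-Θ) := by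
        have e1 : ∀ j ∈ Finset.univ.filter (fun j => b j = k),
            cs j (i (b j)) = ((i k : ℝ)+1) ^ (-(θ j)) := by
          intro j hj
          simp only [Finset.mem_filter] at hj
          simp only [hcsdef, hj.2, if_pos]
        rw [Finset.prod_congr rfl e1]
        rw [show -Θ = ∑ j ∈ Finset.univ.filter (fun j => b j = k), -(θ j) by
          rw [hΘdef, hIkdef, Finset.sum_neg_distrib]]
        exact (Real.rpow_sum_of_pos (by positivity) _ _).symm
      rw [h2, h1, mul_one, ← enorm_eq_nnnorm, Real.enorm_eq_ofReal (by positivity)]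
    · rw [if_neg hi]
      push_neg at hi
      obtain ⟨n, hnk, hn0⟩ := hi
      obtain ⟨j0, hj0⟩ := hb n
      have hj0k : ¬ b j0 = k := by rw [hj0]; exact hnk
      have h0 : ∏ j ∈ Finset.univ.filter (fun j => ¬ b j = k), cs j (i (b j)) = 0 := by
        refine Finset.prod_eq_zero (i := j0) (by simp [hj0k]) ?_
        simp only [hcsdef]
        rw [if_neg hj0k, if_neg (by rw [hj0]; exact hn0)]
      rw [h0, mul_zero, nnnorm_zero]
      simp
  rw [emixed_congr hCf,
    emixed_line d q (fun n => lt_of_lt_of_le one_pos (hq n)) k Cf] at hineq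
  -- the left-hand side is infinite
  have hane : (‖T a‖₊ : ℝ≥0∞) ≠ 0 := by
    simpa using ha
  have hsum : (∑' n : ℕ, Cf n ^ q k) = ⊤ := by
    have e1 : ∀ n : ℕ, Cf n ^ q k
        = ENNReal.ofReal (((n:ℝ)+1) ^ (-(Θ * q k))) * (‖T a‖₊ : ℝ≥0∞) ^ q k := by
      intro n
      rw [hCfdef]
      rw [ENNReal.mul_rpow_of_nonneg _ _ hqk.le,
        ENNReal.ofReal_rpow_of_pos (by positivity)]
      congr 2
      rw [← neg_mul, Real.rpow_mul (by positivity)]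
    rw [tsum_congr e1, ENNReal.tsum_mul_right, tsum_ofReal_rpow_top hΘq.le]
    rw [ENNReal.top_mul]
    intro h
    exact hane (by simpa [ENNReal.rpow_eq_zero_iff, hqk] using h)
  rw [hsum, ENNReal.top_rpow_of_pos (by positivity)] at hineq
  -- but the right-hand side is finite
  have hfin : (C:ℝ≥0∞) * ∏ j, weakNorm (p j) (fun n => cs j n • a j) ≠ ⊤ := by
    refine ENNReal.mul_ne_top ENNReal.coe_ne_top ?_
    refine (ENNReal.prod_lt_top fun j _ => ?_).ne
    have hpj := hppos j
    have hkey : (∑' n : ℕ, (‖cs j n‖₊ : ℝ≥0∞) ^ p j) ≠ ⊤ := by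
      by_cases hbj : b j = k
      · have e2 : ∀ n : ℕ, (‖cs j n‖₊ : ℝ≥0∞) ^ p j
            = ENNReal.ofReal (((n:ℝ)+1) ^ (-(θ j * p j))) := by
          intro n
          simp only [hcsdef, if_pos hbj]
          rw [← enorm_eq_nnnorm, Real.enorm_eq_ofReal (by positivity),
            ENNReal.ofReal_rpow_of_pos (by positivity)]
          congr 1
          rw [← neg_mul, Real.rpow_mul (by positivity)]
        rw [tsum_congr e2]
        refine tsum_ofReal_rpow_ne_top ?_
        have : θ j * p j = 1 + ε * p j := by
          simp only [hθdef]; field_simp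
        rw [this]
        nlinarith [hεpos, hpj]
      · have e2 : ∀ n : ℕ, (‖cs j n‖₊ : ℝ≥0∞) ^ p j
            = if n = 0 then 1 else 0 := by
          intro n
          simp only [hcsdef, if_neg hbj]
          by_cases hn : n = 0
          · simp [hn, ENNReal.one_rpow]
          · simp [hn, ENNReal.zero_rpow_of_pos hpj]
        rw [tsum_congr e2, tsum_ite_eq]
        exact ENNReal.one_ne_top
    have hbd : weakNorm (p j) (fun n => cs j n • a j)
        ≤ (∑' n : ℕ, (‖cs j n‖₊ : ℝ≥0∞) ^ p j) ^ (1 / p j) * ‖a j‖₊ := by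
      refine iSup_le fun f => ?_
      have hterm : ∀ n : ℕ, (‖f.1 (cs j n • a j)‖₊ : ℝ≥0∞) ^ p j
          ≤ ((‖cs j n‖₊ : ℝ≥0∞) * ‖a j‖₊) ^ p j := by
        intro n
        refine ENNReal.rpow_le_rpow ?_ hpj.le
        rw [map_smul, nnnorm_smul, ENNReal.coe_mul]
        refine mul_le_mul_right ?_ _
        have h3 : ‖f.1 (a j)‖₊ ≤ ‖f.1‖₊ * ‖a j‖₊ := f.1.le_opNNNorm _
        have h4 : ‖f.1‖₊ ≤ 1 := by
          rw [← NNReal.coe_le_coe]; exact f.2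
        calc (‖f.1 (a j)‖₊ : ℝ≥0∞) ≤ (‖f.1‖₊ * ‖a j‖₊ : ℝ≥0) := by exact_mod_cast h3
          _ ≤ ((1 : ℝ≥0) * ‖a j‖₊ : ℝ≥0) := by
              exact_mod_cast mul_le_mul_left h4 _
          _ = ‖a j‖₊ := by rw [one_mul]
      calc (∑' n : ℕ, (‖f.1 (cs j n • a j)‖₊ : ℝ≥0∞) ^ p j) ^ (1 / p j)
          ≤ (∑' n : ℕ, ((‖cs j n‖₊ : ℝ≥0∞) * ‖a j‖₊) ^ p j) ^ (1 / p j) :=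
            ENNReal.rpow_le_rpow (ENNReal.tsum_le_tsum hterm) (by positivity)
        _ = (∑' n : ℕ, (‖cs j n‖₊ : ℝ≥0∞) ^ p j * (‖a j‖₊ : ℝ≥0∞) ^ p j) ^ (1 / p j) := by
            rw [tsum_congr fun n => ENNReal.mul_rpow_of_nonneg _ _ hpj.le]
        _ = ((∑' n : ℕ, (‖cs j n‖₊ : ℝ≥0∞) ^ p j) * (‖a j‖₊ : ℝ≥0∞) ^ p j) ^ (1 / p j) := by
            rw [ENNReal.tsum_mul_right]
        _ = (∑' n : ℕ, (‖cs j n‖₊ : ℝ≥0∞) ^ p j) ^ (1 / p j) * ‖a j‖₊ := by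
            rw [ENNReal.mul_rpow_of_nonneg _ _ (by positivity), rpow_inv_self _ hpj]
    refine lt_of_le_of_lt hbd ?_
    exact ENNReal.mul_lt_top
      (ENNReal.rpow_lt_top_of_nonneg (by positivity) hkey) ENNReal.coe_lt_top
  exact hfin (top_le_iff.mp hineq)
end
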